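/- Let n ≥ 1, let κ ∈ {1, −1}, and let a ∈ Mat_n. Suppose y : ℂ → Mat_n is twice differentiable and satisfies the matrix Painlevé II equation P₂¹: y''(z) = κ[y(z), y'(z)] + 2 y(z)³ + z·y(z) + a for all z. For ζ ∈ ℂ with ζ ≠ 0 define w(z) = κ[y(z), y'(z)] + a and the 2×2 block matrices (with n×n blocks) B(ζ,z) = [[ζ·I, y(z)], [y(z), −ζ·I]] and A(ζ,z) = −4ζ·B(ζ,z) + [[2 y(z)² + z·I, −2 y'(z)], [2 y'(z), −2 y(z)² − z·I]] − ζ⁻¹·[[κ·w(z), w(z)], [w(z), κ·w(z)]]. Then for every ζ ≠ 0 and every z: ∂_z A(ζ,z) = ∂_ζ B(ζ,z) + B(ζ,z) A(ζ,z) − A(ζ,z) B(ζ,z), where ∂_ζ B = [[I, 0], [0, −I]]. -/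

import Mathlib

attribute [local instance] Matrix.normedAddCommGroup Matrix.normedSpace

set_option maxHeartbeats 1600000

open Matrix

section aux
variable {l m k : Type*} [Fintype l] [Fintype m] [Fintype k] {z : ℂ}

theorem hasDerivAt_matrix {f : ℂ → Matrix m k ℂ} {f' : Matrix m k ℂ} :
    HasDerivAt f f' z ↔ ∀ i j, HasDerivAt (fun w => f w i j) (f' i j) z := by
  exact hasDerivAt_pi.trans (forall_congr' fun i => hasDerivAt_pi)

theorem HasDerivAt.mmul {f : ℂ → Matrix l m ℂ} {g : ℂ → Matrix m k ℂ}
    {f' : Matrix l m ℂ} {g' : Matrix m k ℂ}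
    (hf : HasDerivAt f f' z) (hg : HasDerivAt g g' z) :
    HasDerivAt (fun w => f w * g w) (f' * g z + f z * g') z := by
  rw [hasDerivAt_matrix] at hf hg ⊢
  intro i j
  simp only [Matrix.mul_apply, Matrix.add_apply, ← Finset.sum_add_distrib]
  exact HasDerivAt.fun_sum fun p _ => (hf i p).mul (hg p j)

theorem HasDerivAt.const_mmul {g : ℂ → Matrix m k ℂ} {g' : Matrix m k ℂ}
    (C : Matrix l m ℂ) (hg : HasDerivAt g g' z) :
    HasDerivAt (fun w => C * g w) (C * g') z := by
  simpa using (hasDerivAt_const z C).mmul hg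

theorem hasDerivAt_fromBlocks {o p : Type*} [Fintype o] [Fintype p]
    {fa : ℂ → Matrix m k ℂ} {fb : ℂ → Matrix m p ℂ} {fc : ℂ → Matrix o k ℂ}
    {fd : ℂ → Matrix o p ℂ} {a' b' c' d'}
    (ha : HasDerivAt fa a' z) (hb : HasDerivAt fb b' z)
    (hc : HasDerivAt fc c' z) (hd : HasDerivAt fd d' z) :
    HasDerivAt (fun w => Matrix.fromBlocks (fa w) (fb w) (fc w) (fd w))
      (Matrix.fromBlocks a' b' c' d') z := by
  rw [hasDerivAt_matrix] at ha hb hc hd ⊢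
  rintro (i | i) (j | j) <;>
    simp only [Matrix.fromBlocks_apply₁₁, Matrix.fromBlocks_apply₁₂,
      Matrix.fromBlocks_apply₂₁, Matrix.fromBlocks_apply₂₂] <;>
    [exact ha i j; exact hb i j; exact hc i j; exact hd i j]

end aux

theorem two_mul_eq_smul {m : Type*} [Fintype m] [DecidableEq m] (X : Matrix m m ℂ) :
    (2 : Matrix m m ℂ) * X = (2 : ℂ) • X := by
  rw [two_mul, two_smul]


/-- `w(z) = κ[y, y'] + a`. -/
noncomputable def wP21 (n : ℕ) (κ : ℂ) (a : Matrix (Fin n) (Fin n) ℂ)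
    (y : ℂ → Matrix (Fin n) (Fin n) ℂ) (z : ℂ) : Matrix (Fin n) (Fin n) ℂ :=
  κ • (y z * deriv y z - deriv y z * y z) + a

/-- The matrix `B(ζ,z) = [[ζI, y(z)], [y(z), −ζI]]`. -/
noncomputable def BlaxP21 (n : ℕ) (y : ℂ → Matrix (Fin n) (Fin n) ℂ) (ζ z : ℂ) :
    Matrix (Fin n ⊕ Fin n) (Fin n ⊕ Fin n) ℂ :=
  Matrix.fromBlocks (ζ • 1) (y z) (y z) (-(ζ • 1))

/-- The matrix
`A(ζ,z) = −4ζB + [[2y²+z, −2y'], [2y', −2y²−z]] − ζ⁻¹ [[κw, w], [w, κw]]`. -/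
noncomputable def AlaxP21 (n : ℕ) (κ : ℂ) (a : Matrix (Fin n) (Fin n) ℂ)
    (y : ℂ → Matrix (Fin n) (Fin n) ℂ) (ζ z : ℂ) :
    Matrix (Fin n ⊕ Fin n) (Fin n ⊕ Fin n) ℂ :=
  (-(4 * ζ)) • BlaxP21 n y ζ z +
    Matrix.fromBlocks
      (2 * (y z)^2 + z • 1) (-(2 * deriv y z)) (2 * deriv y z) (-(2 * (y z)^2) - z • 1)
    - ζ⁻¹ • Matrix.fromBlocks
        (κ • wP21 n κ a y z) (wP21 n κ a y z) (wP21 n κ a y z) (κ • wP21 n κ a y z)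

/-- isomonodromic Lax pair `A' = B_ζ + [B, A]` for the matrix
Painlevé II equation P₂¹, with `B_ζ = [[I,0],[0,−I]]`. -/
theorem matrixP21_lax_pair (n : ℕ) (hn : 1 ≤ n)
    (κ : ℂ) (hκ : κ = 1 ∨ κ = -1)
    (a : Matrix (Fin n) (Fin n) ℂ)
    (y : ℂ → Matrix (Fin n) (Fin n) ℂ)
    (hy : Differentiable ℂ y) (hy' : Differentiable ℂ (deriv y))
    (heq : ∀ z : ℂ, deriv (deriv y) z =
      κ • (y z * deriv y z - deriv y z * y z) + (2 : ℂ) • (y z) ^ 3 + z • y z + a) :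
    ∀ ζ z : ℂ, ζ ≠ 0 →
      deriv (fun w => AlaxP21 n κ a y ζ w) z =
        Matrix.fromBlocks 1 0 0 (-1)
          + BlaxP21 n y ζ z * AlaxP21 n κ a y ζ z
          - AlaxP21 n κ a y ζ z * BlaxP21 n y ζ z ∧
      deriv (fun w => BlaxP21 n y w z) ζ = Matrix.fromBlocks 1 0 0 (-1) := by
  intro ζ z hζ
  set Y := y z with hY
  set Y1 := deriv y z with hY1
  set Y2 := deriv (deriv y) z with hY2
  -- part 2 first
  have hBz : HasDerivAt (fun w => BlaxP21 n y w z)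
      (Matrix.fromBlocks 1 0 0 (-1)) ζ := by
    refine hasDerivAt_fromBlocks ?_ (hasDerivAt_const _ _) (hasDerivAt_const _ _) ?_
    · have h := (hasDerivAt_id ζ).smul_const (1 : Matrix (Fin n) (Fin n) ℂ)
      simp only [id, one_smul] at h; exact h
    · have h := ((hasDerivAt_id ζ).smul_const (1 : Matrix (Fin n) (Fin n) ℂ)).neg
      simp only [id, one_smul] at h; exact h
  -- derivative of w
  have hw : HasDerivAt (wP21 n κ a y) (κ • (Y * Y2 - Y2 * Y)) z := by
    have h := ((((hy z).hasDerivAt.mmul (hy' z).hasDerivAt).sub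
        ((hy' z).hasDerivAt.mmul (hy z).hasDerivAt)).const_smul κ).add_const a
    have e : κ • (Y1 * Y1 + Y * Y2 - (Y2 * Y + Y1 * Y1)) = κ • (Y * Y2 - Y2 * Y) := by
      congr 1; abel
    exact e ▸ h
  -- derivative of B in z
  have hB0 : HasDerivAt (fun w => BlaxP21 n y ζ w)
      (Matrix.fromBlocks 0 Y1 Y1 0) z :=
    hasDerivAt_fromBlocks (hasDerivAt_const _ _) (hy z).hasDerivAt (hy z).hasDerivAt
      (hasDerivAt_const _ _)
  have hsq : HasDerivAt (fun w => (y w)^2) (Y1 * Y + Y * Y1) z := by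
    have h := (hy z).hasDerivAt.mmul (hy z).hasDerivAt
    simp only [sq]; exact h
  have hsmul1 : HasDerivAt (fun w : ℂ => w • (1 : Matrix (Fin n) (Fin n) ℂ)) 1 z := by
    have h := (hasDerivAt_id z).smul_const (1 : Matrix (Fin n) (Fin n) ℂ)
    simp only [id, one_smul] at h; exact h
  have h11 : HasDerivAt (fun w => 2 * (y w)^2 + w • (1 : Matrix (Fin n) (Fin n) ℂ))
      (2 * (Y1 * Y + Y * Y1) + 1) z := (hsq.const_mmul 2).add hsmul1
  have h12 : HasDerivAt (fun w => -(2 * deriv y w)) (-(2 * Y2)) z :=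
    ((hy' z).hasDerivAt.const_mmul 2).neg
  have h21 : HasDerivAt (fun w => 2 * deriv y w) (2 * Y2) z :=
    (hy' z).hasDerivAt.const_mmul 2
  have h22 : HasDerivAt (fun w => -(2 * (y w)^2) - w • (1 : Matrix (Fin n) (Fin n) ℂ))
      (-(2 * (Y1 * Y + Y * Y1)) - 1) z := (hsq.const_mmul 2).neg.sub hsmul1
  have hN : HasDerivAt (fun w => Matrix.fromBlocks
      (κ • wP21 n κ a y w) (wP21 n κ a y w) (wP21 n κ a y w) (κ • wP21 n κ a y w))
      (Matrix.fromBlocks (κ • (κ • (Y * Y2 - Y2 * Y))) (κ • (Y * Y2 - Y2 * Y))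
        (κ • (Y * Y2 - Y2 * Y)) (κ • (κ • (Y * Y2 - Y2 * Y)))) z :=
    hasDerivAt_fromBlocks (hw.const_smul κ) hw hw (hw.const_smul κ)
  have hA : HasDerivAt (fun w => AlaxP21 n κ a y ζ w)
      ((-(4 * ζ)) • Matrix.fromBlocks 0 Y1 Y1 0 +
        Matrix.fromBlocks (2 * (Y1 * Y + Y * Y1) + 1) (-(2 * Y2)) (2 * Y2)
          (-(2 * (Y1 * Y + Y * Y1)) - 1)
        - ζ⁻¹ • Matrix.fromBlocks (κ • (κ • (Y * Y2 - Y2 * Y))) (κ • (Y * Y2 - Y2 * Y))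
            (κ • (Y * Y2 - Y2 * Y)) (κ • (κ • (Y * Y2 - Y2 * Y)))) z :=
    ((hB0.const_smul (-(4 * ζ))).add (hasDerivAt_fromBlocks h11 h12 h21 h22)).sub
      (hN.const_smul ζ⁻¹)
  refine ⟨?_, hBz.deriv⟩
  refine hA.deriv.trans ?_
  -- now the algebraic identity
  have hY2eq : Y2 = κ • (Y * Y1 - Y1 * Y) + (2 : ℂ) • Y ^ 3 + z • Y + a := heq z
  rcases hκ with rfl | rfl <;>
  · simp only [AlaxP21, BlaxP21, wP21, ← hY, ← hY1, hY2eq] <;>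
    simp only [Matrix.fromBlocks_multiply, Matrix.fromBlocks_add, Matrix.fromBlocks_smul,
      Matrix.fromBlocks_neg, sub_eq_add_neg, Matrix.fromBlocks_add, Matrix.fromBlocks_neg,
      Matrix.fromBlocks_smul] <;>
    rw [Matrix.fromBlocks_inj] <;>
    refine ⟨?_, ?_, ?_, ?_⟩ <;>
    · simp only [two_mul_eq_smul, pow_succ, pow_zero, one_mul, one_smul, neg_smul, smul_add,
        smul_sub, smul_neg, smul_smul, mul_add, add_mul, mul_sub, sub_mul, neg_mul, mul_neg,
        mul_one, one_mul, smul_mul_assoc, mul_smul_comm, mul_assoc, neg_neg, neg_add,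
        two_mul_eq_smul]
      match_scalars <;> (try field_simp) <;> ring
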